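/- Let 𝕂 ∈ {ℝ, ℂ}, let σ : 𝕂 → 𝕂 be any function, let d ≥ 1, let L ≥ 2, and let D_1, …, D_{L-1} ∈ ℕ with n = D_1 + ⋯ + D_{L-1}. Then every shallow neural network f ∈ M_{σ,n} on 𝕂^d is computed exactly by a residual network in R_{L,σ}(d+1, D_1, …, D_{L-1}); that is, M_{σ,n} ⊆ R_{L,σ}(d+1, D_1, …, D_{L-1}). -/

import Mathlib

open scoped BigOperators

/-- The residual blocks of a ResNet with internal width `d0` and block widths given by the
list `Ds` (head = first block): the map taking the initial internal state `z⁰` to the final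
internal state `z^{L-1}` via `z^ℓ = z^{ℓ-1} + A^ℓ σ(W^ℓ z^{ℓ-1} + b^ℓ)`. -/
def ResBlocks {𝕂 : Type} [RCLike 𝕂] (σ : 𝕂 → 𝕂) (d0 : ℕ) :
    List ℕ → Set ((Fin d0 → 𝕂) → (Fin d0 → 𝕂))
  | [] => {f | f = id}
  | D :: Ds =>
    {f | ∃ (A : Matrix (Fin d0) (Fin D) 𝕂) (W : Matrix (Fin D) (Fin d0) 𝕂) (b : Fin D → 𝕂),
         ∃ g ∈ ResBlocks σ d0 Ds,
         f = fun z => g (z + A.mulVec fun i => σ (W.mulVec z i + b i))}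

/-- The class `R_{L,σ}(d0, D_1, …, D_{L-1})` of functions `𝕂^d → 𝕂` computed by residual
networks: `z⁰ = A⁰ z + b⁰`, then the residual blocks of widths `Ds = [D_1, …, D_{L-1}]`, and a
final linear output layer `z ↦ A^L z^{L-1}`. -/
def ResNet {𝕂 : Type} [RCLike 𝕂] (σ : 𝕂 → 𝕂) (d d0 : ℕ) (Ds : List ℕ) :
    Set ((Fin d → 𝕂) → 𝕂) :=
  {f | ∃ (A0 : Matrix (Fin d0) (Fin d) 𝕂) (b0 : Fin d0 → 𝕂) (AL : Fin d0 → 𝕂),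
       ∃ h ∈ ResBlocks σ d0 Ds,
       f = fun z => ∑ i, AL i * h (A0.mulVec z + b0) i}

/-- The class `M_{σ,n}` of shallow networks on `𝕂^d` with exactly `n` neurons. -/
def ShallowN {𝕂 : Type} [RCLike 𝕂] (σ : 𝕂 → 𝕂) (d n : ℕ) : Set ((Fin d → 𝕂) → 𝕂) :=
  {f | ∃ (a : Fin n → 𝕂) (w : Fin n → Fin d → 𝕂) (b : Fin n → 𝕂),
    f = fun z => ∑ k, a k * σ ((∑ i, (starRingEnd 𝕂) (w k i) * z i) + b k)}

/-- Every shallow network with `n = D_1 + ⋯ + D_{L-1}` neurons is computed exactly by a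
residual network of depth `L` with internal width `d + 1` and block widths `D_1, …, D_{L-1}`. -/
lemma resBlocks_aux {𝕂 : Type} [RCLike 𝕂] (σ : 𝕂 → 𝕂) (d : ℕ) (Ds : List ℕ)
    (a : Fin Ds.sum → 𝕂) (c : Fin Ds.sum → Fin d → 𝕂) (b : Fin Ds.sum → 𝕂) :
    ∃ g ∈ ResBlocks σ (d+1) Ds,
      ∀ z : Fin (d+1) → 𝕂, g z = z + fun j =>
        if j = Fin.last d then ∑ k, a k * σ ((∑ i, c k i * z i.castSucc) + b k) else 0 := by
  induction Ds with
  | nil =>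
    refine ⟨id, rfl, fun z => ?_⟩
    funext j
    simp
    intro _; exact Finset.sum_eq_zero fun k _ => absurd k.2 (by simp)
  | cons D Ds ih =>
    obtain ⟨g', hg', hgeq⟩ := ih (fun k => a (Fin.natAdd D k))
      (fun k => c (Fin.natAdd D k)) (fun k => b (Fin.natAdd D k))
    set m := Ds.sum with hm
    set A : Matrix (Fin (d+1)) (Fin D) 𝕂 :=
      fun j k => if j = Fin.last d then a (Fin.castAdd m k) else 0 with hA
    set W : Matrix (Fin D) (Fin (d+1)) 𝕂 :=
      fun k => Fin.lastCases (motive := fun _ => 𝕂) 0 (fun i => c (Fin.castAdd m k) i) with hW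
    refine ⟨_, ⟨A, W, (fun k => b (Fin.castAdd m k)), g', hg', rfl⟩, fun z => ?_⟩
    have hWz : ∀ k, W.mulVec z k = ∑ i : Fin d, c (Fin.castAdd m k) i * z i.castSucc := by
      intro k
      rw [Matrix.mulVec, dotProduct, Fin.sum_univ_castSucc]
      simp [hW]
    set u := z + A.mulVec fun k => σ (W.mulVec z k + b (Fin.castAdd m k)) with hu
    have hucast : ∀ i : Fin d, u i.castSucc = z i.castSucc := by
      intro i
      have : Fin.castSucc i ≠ Fin.last d := (Fin.castSucc_lt_last i).ne
      simp [hu, Matrix.mulVec, dotProduct, hA, this]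
    have hulast : u (Fin.last d) = z (Fin.last d) +
        ∑ k : Fin D, a (Fin.castAdd m k) * σ ((∑ i, c (Fin.castAdd m k) i * z i.castSucc) + b (Fin.castAdd m k)) := by
      simp only [hu, Pi.add_apply, Matrix.mulVec, dotProduct, hA, if_true]
      congr 1
      refine Finset.sum_congr rfl fun k _ => ?_
      congr 2
      rw [Fin.sum_univ_castSucc]
      simp [hW]
    have hsplit : (∑ k : Fin (D :: Ds).sum, a k * σ ((∑ i, c k i * z i.castSucc) + b k))
        = (∑ k : Fin D, a (Fin.castAdd m k) * σ ((∑ i, c (Fin.castAdd m k) i * z i.castSucc) + b (Fin.castAdd m k)))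
        + ∑ k : Fin m, a (Fin.natAdd D k) * σ ((∑ i, c (Fin.natAdd D k) i * z i.castSucc) + b (Fin.natAdd D k)) :=
      Fin.sum_univ_add _
    rw [hgeq]
    funext j
    refine Fin.lastCases ?_ (fun i => ?_) j
    · simp only [Pi.add_apply, if_true]
      rw [hulast, hsplit]
      have : ∀ k : Fin m, (∑ i, c (Fin.natAdd D k) i * u i.castSucc)
          = ∑ i, c (Fin.natAdd D k) i * z i.castSucc := by
        intro k; exact Finset.sum_congr rfl fun i _ => by rw [hucast]
      simp only [this]
      ring
    · have hne : Fin.castSucc i ≠ Fin.last d := (Fin.castSucc_lt_last i).ne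
      simp only [Pi.add_apply, if_neg hne, add_zero]
      rw [hucast]

theorem shallowN_subset_resNet {𝕂 : Type} [RCLike 𝕂] (σ : 𝕂 → 𝕂) (d : ℕ) (hd : 1 ≤ d)
    (L : ℕ) (hL : 2 ≤ L) (D : Fin (L - 1) → ℕ) (n : ℕ) (hn : n = ∑ i, D i) :
    ShallowN σ d n ⊆ ResNet σ d (d + 1) (List.ofFn D) := by
  intro f hf
  obtain ⟨a, w, b, rfl⟩ := hf
  have hsum : (List.ofFn D).sum = n := by rw [List.sum_ofFn, hn]
  obtain ⟨g, hg, hgeq⟩ := resBlocks_aux σ d (List.ofFn D)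
    (fun k => a (Fin.cast hsum k))
    (fun k i => (starRingEnd 𝕂) (w (Fin.cast hsum k) i))
    (fun k => b (Fin.cast hsum k))
  refine ⟨Matrix.of (fun j i => if j = Fin.castSucc i then 1 else 0), 0,
    (fun j => if j = Fin.last d then 1 else 0), g, hg, ?_⟩
  funext z
  set A0 : Matrix (Fin (d+1)) (Fin d) 𝕂 := Matrix.of (fun j i => if j = Fin.castSucc i then 1 else 0) with hA0
  set z0 : Fin (d+1) → 𝕂 := A0.mulVec z + 0 with hz0
  have hz0cast : ∀ i : Fin d, z0 i.castSucc = z i := by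
    intro i
    simp [hz0, hA0, Matrix.mulVec, dotProduct, Fin.castSucc_inj]
  have hz0last : z0 (Fin.last d) = 0 := by
    have : ∀ i : Fin d, Fin.last d ≠ Fin.castSucc i := fun i => ((Fin.castSucc_lt_last i).ne).symm
    simp [hz0, hA0, Matrix.mulVec, dotProduct, this]
  have hpick : (∑ j, (if j = Fin.last d then (1:𝕂) else 0) * g z0 j) = g z0 (Fin.last d) := by
    rw [Finset.sum_eq_single (Fin.last d)]
    · simp
    · intro j _ hj; simp [hj]
    · simp
  rw [hpick, hgeq]
  simp only [Pi.add_apply, if_true, hz0last, zero_add]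
  symm
  rw [Fintype.sum_equiv (finCongr hsum) _ (fun k => a k * σ ((∑ i, (starRingEnd 𝕂) (w k i) * z i) + b k))]
  intro k
  simp only [finCongr_apply, hz0cast]
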